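/- Let k be a commutative ring, R a commutative k-algebra, and M and N R-modules. Regard Hom_k(M,N) as a module over R ⊗_k R via ((r ⊗ s)·θ)(m) = r·θ(s·m), and let J be the kernel of the multiplication map R ⊗_k R → R, r ⊗ s ↦ rs. Then for every θ ∈ Hom_k(M,N) and every n ≥ 0, θ ∈ D^n_k(M,N) if and only if J^{n+1}·θ = 0. -/

import Mathlib

open TensorProduct

/-- `IsDiffOpOfOrder R n f` : the map `f : M → N` is a differential operator of order at most
`n` relative to `R`, in the inductive sense. -/
def IsDiffOpOfOrder (R : Type*) [CommRing R] {M N : Type*} [AddCommGroup M] [Module R M]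
    [AddCommGroup N] [Module R N] : ℕ → (M → N) → Prop
  | 0, f => ∀ (r : R) (m : M), f (r • m) = r • f m
  | n + 1, f => ∀ r : R, IsDiffOpOfOrder R n (fun m => r • f m - f (r • m))

section TensorAction

variable (k R M N : Type*) [CommRing k] [CommRing R] [Algebra k R]
  [AddCommGroup M] [Module k M] [Module R M] [IsScalarTower k R M]
  [AddCommGroup N] [Module k N] [Module R N] [IsScalarTower k R N]

/-- The action of `R ⊗[k] R` on `Hom_k(M, N)` given on pure tensors by
`((r ⊗ s) • θ) (m) = r • θ (s • m)`, as a `k`-linear map. -/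
noncomputable def tensorHomAction : (R ⊗[k] R) →ₗ[k] (M →ₗ[k] N) →ₗ[k] (M →ₗ[k] N) :=
  TensorProduct.lift <| LinearMap.mk₂ k
    (fun r s =>
      (DistribSMul.toLinearMap k (M →ₗ[k] N) r).comp
        (LinearMap.lcomp k N (DistribSMul.toLinearMap k M s)))
    (fun r r' s => by
      ext θ m
      simp [add_smul])
    (fun a r s => by
      ext θ m
      simp [smul_assoc])
    (fun r s s' => by
      ext θ m
      simp [add_smul])
    (fun a r s => by
      ext θ m
      simp only [LinearMap.coe_comp, Function.comp_apply, LinearMap.lcomp_apply,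
        DistribSMul.toLinearMap_apply, LinearMap.smul_apply, map_smul, smul_assoc]
      rw [smul_comm])

/-- The kernel `J` of the multiplication map `R ⊗[k] R → R`. -/
noncomputable def mulKer : Ideal (R ⊗[k] R) :=
  RingHom.ker (Algebra.TensorProduct.lmul' k (S := R)).toRingHom


section Aux
variable {k R M N : Type*} [CommRing k] [CommRing R] [Algebra k R]
  [AddCommGroup M] [Module k M] [Module R M] [IsScalarTower k R M]
  [AddCommGroup N] [Module k N] [Module R N] [IsScalarTower k R N]

lemma act_tmul (r s : R) (θ : M →ₗ[k] N) (m : M) :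
    tensorHomAction k R M N (r ⊗ₜ s) θ m = r • θ (s • m) := by
  simp [tensorHomAction]

lemma act_mul (a b : R ⊗[k] R) (θ : M →ₗ[k] N) :
    tensorHomAction k R M N (a * b) θ
      = tensorHomAction k R M N a (tensorHomAction k R M N b θ) := by
  induction a using TensorProduct.induction_on with
  | zero => simp
  | tmul r s =>
    induction b using TensorProduct.induction_on with
    | zero => simp
    | tmul r' s' =>
      ext m
      rw [Algebra.TensorProduct.tmul_mul_tmul]
      simp only [act_tmul]
      rw [mul_smul, mul_smul, smul_comm s s']
    | add x y hx hy =>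
      simp only [mul_add, map_add, LinearMap.add_apply, hx, hy]
  | add x y hx hy =>
    simp only [add_mul, map_add, LinearMap.add_apply, hx, hy]

/-- `deltaT k R r = r ⊗ 1 - 1 ⊗ r`. -/
noncomputable def deltaT (k R : Type*) [CommRing k] [CommRing R] [Algebra k R] (r : R) :
    R ⊗[k] R := r ⊗ₜ 1 - 1 ⊗ₜ r

lemma deltaT_mem_mulKer (r : R) : deltaT k R r ∈ mulKer k R := by
  simp [deltaT, mulKer, RingHom.mem_ker, mul_comm]

lemma mulKer_le_span : mulKer k R ≤ Ideal.span (Set.range (deltaT k R)) := by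
  intro a ha
  have key : ∀ a : R ⊗[k] R,
      a - (Algebra.TensorProduct.lmul' k (S := R) a) ⊗ₜ (1 : R)
        ∈ Ideal.span (Set.range (deltaT k R)) := by
    intro a
    induction a using TensorProduct.induction_on with
    | zero => simp
    | tmul r s =>
      have h1 : (r : R) ⊗ₜ[k] s - (r * s) ⊗ₜ[k] (1 : R)
          = (r ⊗ₜ[k] (1 : R)) * (-(deltaT k R s)) := by
        simp [deltaT, mul_sub, Algebra.TensorProduct.tmul_mul_tmul]
      simpa [h1] using Ideal.mul_mem_left _ (r ⊗ₜ[k] (1 : R))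
        (neg_mem (Ideal.subset_span (Set.mem_range_self s)))
    | add x y hx hy =>
      have : (x + y) - (Algebra.TensorProduct.lmul' k (S := R) (x + y)) ⊗ₜ (1 : R)
          = (x - (Algebra.TensorProduct.lmul' k (S := R) x) ⊗ₜ (1 : R))
            + (y - (Algebra.TensorProduct.lmul' k (S := R) y) ⊗ₜ (1 : R)) := by
        rw [map_add, add_tmul]; abel
      rw [this]; exact add_mem hx hy
  have hz : Algebra.TensorProduct.lmul' k (S := R) a = 0 := ha
  simpa [hz] using key a

/-- Main span-based annihilation lemma. -/
lemma act_mul_mem_ker_eq_zero {I : Ideal (R ⊗[k] R)} (θ : M →ₗ[k] N)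
    (h : ∀ x ∈ I, ∀ r : R, tensorHomAction k R M N (x * deltaT k R r) θ = 0) :
    ∀ x ∈ I, ∀ y ∈ mulKer k R, tensorHomAction k R M N (x * y) θ = 0 := by
  have main : ∀ y ∈ Ideal.span (Set.range (deltaT k R)),
      ∀ x ∈ I, tensorHomAction k R M N (x * y) θ = 0 := by
    intro y hy
    induction hy using Submodule.span_induction with
    | mem y hmem =>
      intro x hx
      obtain ⟨r, rfl⟩ := Set.mem_range.mp hmem
      exact h x hx r
    | zero => intro x hx; simp
    | add y z _ _ ihy ihz =>
      intro x hx
      rw [mul_add, map_add, LinearMap.add_apply, ihy x hx, ihz x hx, add_zero]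
    | smul c y _ ih =>
      intro x hx
      have hxy : x * (c • y) = (x * c) * y := by rw [smul_eq_mul]; ring
      rw [hxy]
      exact ih (x * c) (Ideal.mul_mem_right _ _ hx)
  intro x hx y hy
  exact main y (mulKer_le_span hy) x hx

lemma act_delta_coe (r : R) (θ : M →ₗ[k] N) :
    ⇑(tensorHomAction k R M N (deltaT k R r) θ) = fun m => r • θ m - θ (r • m) := by
  funext m
  simp [deltaT, act_tmul]

end Aux

/-- **Proposition.** A `k`-linear map `θ : M → N` is a differential operator of order `≤ n`
if and only if it is annihilated by `J^{n+1}`, where `J = ker (R ⊗_k R → R)` acts on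
`Hom_k(M, N)` by `((r ⊗ s) • θ) (m) = r • θ (s • m)`. -/
theorem isDiffOpOfOrder_iff_mulKer_pow_smul_eq_zero
    (θ : M →ₗ[k] N) (n : ℕ) :
    IsDiffOpOfOrder R n ⇑θ ↔
      ∀ a ∈ (mulKer k R) ^ (n + 1), tensorHomAction k R M N a θ = 0 := by
  induction n generalizing θ with
  | zero =>
    constructor
    · intro hθ a ha
      rw [pow_one] at ha
      have hbr : ∀ r : R, tensorHomAction k R M N (deltaT k R r) θ = 0 := by
        intro r
        ext m
        rw [act_delta_coe]
        have := hθ r m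
        simp [this]
      have := act_mul_mem_ker_eq_zero θ (I := (⊤ : Ideal (R ⊗[k] R)))
        (fun x _ r => by rw [act_mul, hbr r, map_zero]) 1 trivial a ha
      simpa using this
    · intro h r m
      have h1 := h (deltaT k R r) (by simpa [pow_one] using deltaT_mem_mulKer (k := k) r)
      have h2 := LinearMap.congr_fun h1 m
      rw [act_delta_coe] at h2
      simp only [LinearMap.zero_apply] at h2
      exact (sub_eq_zero.mp h2).symm
  | succ n ih =>
    have step : IsDiffOpOfOrder R (n + 1) ⇑θ ↔
        ∀ r : R, IsDiffOpOfOrder R n ⇑(tensorHomAction k R M N (deltaT k R r) θ) := by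
      simp only [IsDiffOpOfOrder, act_delta_coe]
    rw [step]
    constructor
    · intro h a ha
      rw [pow_succ] at ha
      refine Submodule.mul_induction_on ha ?_ ?_
      · intro x hx y hy
        exact act_mul_mem_ker_eq_zero θ
          (fun x' hx' r => by
            rw [act_mul]
            exact (ih _).mp (h r) x' hx') x hx y hy
      · intro x y px py
        rw [map_add, LinearMap.add_apply, px, py, add_zero]
    · intro h r
      refine (ih _).mpr ?_
      intro a ha
      rw [← act_mul]
      apply h
      rw [pow_succ]
      exact Ideal.mul_mem_mul ha (deltaT_mem_mulKer r)


end TensorAction
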